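/- Let G be a group generated by a finite set {g_1, ..., g_n}, let λ be its left regular representation on ℓ²(G), and let M_λ = (1/n)(λ(g_1) + ⋯ + λ(g_n)) be the associated Markov operator. Then G is amenable if and only if 1 belongs to the spectrum of M_λ, i.e., if and only if I − M_λ is not invertible on ℓ²(G). -/

import Mathlib

open scoped ENNReal

/-- The space `ℓ∞(G)` of bounded complex functions on `G`, as a submodule of `G → ℂ`. -/
noncomputable def boundedFuns (G : Type*) : Submodule ℂ (G → ℂ) where
  carrier := {f | ∃ C : ℝ, ∀ x, ‖f x‖ ≤ C}
  add_mem' := by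
    rintro f g ⟨C, hC⟩ ⟨D, hD⟩
    exact ⟨C + D, fun x => (norm_add_le _ _).trans (add_le_add (hC x) (hD x))⟩
  zero_mem' := ⟨0, fun x => by simp⟩
  smul_mem' := by
    rintro c f ⟨C, hC⟩
    exact ⟨‖c‖ * C, fun x => by
      simpa [norm_smul] using mul_le_mul_of_nonneg_left (hC x) (norm_nonneg c)⟩

/-- A group `G` is amenable if there is a left-invariant mean on `ℓ∞(G)`: a linear functional
`m` with `m(1) = 1`, `m(f) ≥ 0` for `f` taking values in `[0, ∞)`, and
`m(g·f) = m(f)` where `(g·f)(x) = f(g⁻¹x)`. -/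
def IsAmenable (G : Type*) [Group G] : Prop :=
  ∃ m : boundedFuns G →ₗ[ℂ] ℂ,
    m ⟨fun _ => 1, 1, fun _ => by simp⟩ = 1 ∧
    (∀ f : boundedFuns G, (∀ x, ∃ r : ℝ, 0 ≤ r ∧ (f : G → ℂ) x = r) →
      ∃ r : ℝ, 0 ≤ r ∧ m f = r) ∧
    (∀ (g : G) (f : boundedFuns G),
      m ⟨fun x => (f : G → ℂ) (g⁻¹ * x), by
        obtain ⟨C, hC⟩ := f.2
        exact ⟨C, fun x => hC _⟩⟩ = m f)


noncomputable section
namespace Kesten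

open Filter Topology

set_option linter.unusedSectionVars false
set_option maxHeartbeats 1000000

variable {G : Type*} [Group G]


local notation "H" => lp (fun _ : G => ℂ) 2

lemma norm_sq_eq {E : Type*} [NormedAddCommGroup E] (f : lp (fun _ : G => E) 2) :
    ‖f‖ ^ 2 = ∑' x, ‖(f : ∀ _ : G, E) x‖ ^ 2 := by
  have h := lp.norm_rpow_eq_tsum (p := 2) (by norm_num) f
  have e : ((2 : ℝ≥0∞)).toReal = ((2:ℕ):ℝ) := by norm_num
  rw [e] at h
  simpa [Real.rpow_natCast] using h

lemma summable_norm_sq {E : Type*} [NormedAddCommGroup E] (f : lp (fun _ : G => E) 2) :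
    Summable fun x => ‖(f : ∀ _ : G, E) x‖ ^ 2 := by
  have h := (lp.memℓp f).summable (p := 2) (by norm_num)
  have e : ((2 : ℝ≥0∞)).toReal = ((2:ℕ):ℝ) := by norm_num
  rw [e] at h
  simpa [Real.rpow_natCast] using h

lemma memℓp_two_real {f : G → ℝ} (h0 : ∀ x, 0 ≤ f x) (hf : Summable fun x => f x ^ 2) :
    Memℓp f (2:ℝ≥0∞) := by
  refine memℓp_gen ?_
  have e : ((2 : ℝ≥0∞)).toReal = ((2:ℕ):ℝ) := by norm_num
  rw [e]
  simpa [Real.rpow_natCast, Real.norm_of_nonneg (h0 _)] using hf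

/-- Cauchy–Schwarz for coordinates. -/
lemma tsum_mul_norm_le (u v : H) :
    ∑' x, ‖(u : G → ℂ) x‖ * ‖(v : G → ℂ) x‖ ≤ ‖u‖ * ‖v‖ := by
  set U : lp (fun _ : G => ℝ) 2 :=
    ⟨fun x => ‖(u : G → ℂ) x‖,
      memℓp_two_real (fun _ => norm_nonneg _) (summable_norm_sq u)⟩
  set V : lp (fun _ : G => ℝ) 2 :=
    ⟨fun x => ‖(v : G → ℂ) x‖,
      memℓp_two_real (fun _ => norm_nonneg _) (summable_norm_sq v)⟩
  have hUV : (inner ℝ U V : ℝ) = ∑' x, ‖(u : G → ℂ) x‖ * ‖(v : G → ℂ) x‖ := by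
    rw [lp.inner_eq_tsum]
    congr 1
    funext x
    simp [U, V, mul_comm]
  have hU : ‖U‖ = ‖u‖ := by
    have h1 : ‖U‖ ^ 2 = ‖u‖ ^ 2 := by
      rw [norm_sq_eq, norm_sq_eq]
      congr 1
      funext x
      simp [U, Real.norm_of_nonneg (norm_nonneg _)]
    nlinarith [norm_nonneg U, norm_nonneg u]
  have hV : ‖V‖ = ‖v‖ := by
    have h1 : ‖V‖ ^ 2 = ‖v‖ ^ 2 := by
      rw [norm_sq_eq, norm_sq_eq]
      congr 1
      funext x
      simp [V, Real.norm_of_nonneg (norm_nonneg _)]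
    nlinarith [norm_nonneg V, norm_nonneg v]
  calc ∑' x, ‖(u : G → ℂ) x‖ * ‖(v : G → ℂ) x‖ = inner ℝ U V := hUV.symm
    _ ≤ ‖U‖ * ‖V‖ := real_inner_le_norm U V
    _ = ‖u‖ * ‖v‖ := by rw [hU, hV]

lemma sqrt_sub_sq_le {a b : ℝ} (ha : 0 ≤ a) (hb : 0 ≤ b) :
    (Real.sqrt a - Real.sqrt b) ^ 2 ≤ |a - b| := by
  rcases le_total a b with h | h
  · rw [abs_of_nonpos (by linarith)]
    nlinarith [Real.sq_sqrt ha, Real.sq_sqrt hb, Real.sqrt_nonneg a, Real.sqrt_nonneg b,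
      Real.sqrt_le_sqrt h]
  · rw [abs_of_nonneg (by linarith)]
    nlinarith [Real.sq_sqrt ha, Real.sq_sqrt hb, Real.sqrt_nonneg a, Real.sqrt_nonneg b,
      Real.sqrt_le_sqrt h]

section lam

variable (lam : G → (lp (fun _ : G => ℂ) 2 →L[ℂ] lp (fun _ : G => ℂ) 2))
  (hlam : ∀ (x : G) (f : lp (fun _ : G => ℂ) 2) (y : G),
    (lam x f : ∀ _ : G, ℂ) y = f (x⁻¹ * y))

include hlam

lemma lam_mul (a b : G) (f : H) : lam a (lam b f) = lam (a * b) f := by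
  apply lp.ext
  funext y
  rw [hlam, hlam, hlam, mul_inv_rev, mul_assoc]

lemma lam_one (f : H) : lam 1 f = f := by
  apply lp.ext
  funext y
  rw [hlam]; simp

lemma lam_norm (a : G) (f : H) : ‖lam a f‖ = ‖f‖ := by
  have h1 : ‖lam a f‖ ^ 2 = ‖f‖ ^ 2 := by
    rw [norm_sq_eq, norm_sq_eq]
    have := Equiv.tsum_eq (Equiv.mulLeft a) (fun y => ‖(lam a f : G → ℂ) y‖ ^ 2)
    rw [← this]
    congr 1
    funext z
    rw [hlam]
    simp
  nlinarith [norm_nonneg f, norm_nonneg (lam a f), h1]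

lemma lam_inv_norm (a : G) (f g : H) : ‖lam a⁻¹ f - g‖ = ‖lam a g - f‖ := by
  have : lam a (lam a⁻¹ f - g) = f - lam a g := by
    rw [map_sub, lam_mul lam hlam, mul_inv_cancel, lam_one lam hlam]
  rw [← lam_norm lam hlam a (lam a⁻¹ f - g), this, norm_sub_rev]

/-- Almost invariance extends from a generating set to the whole group. -/
lemma extend_almost_inv (S : Set G) (hS : Subgroup.closure S = ⊤) (ξ : ℕ → H)
    (h : ∀ s ∈ S, Tendsto (fun k => ‖lam s (ξ k) - ξ k‖) atTop (𝓝 0)) (a : G) :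
    Tendsto (fun k => ‖lam a (ξ k) - ξ k‖) atTop (𝓝 0) := by
  have ha : a ∈ Subgroup.closure S := by rw [hS]; trivial
  induction ha using Subgroup.closure_induction with
  | mem s hs => exact h s hs
  | one =>
    have : (fun k => ‖lam 1 (ξ k) - ξ k‖) = fun _ => (0:ℝ) := by
      funext k; rw [lam_one lam hlam]; simp
    rw [this]; exact tendsto_const_nhds
  | mul a b _ _ iha ihb =>
    have key : ∀ k, ‖lam (a*b) (ξ k) - ξ k‖ ≤
        ‖lam b (ξ k) - ξ k‖ + ‖lam a (ξ k) - ξ k‖ := by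
      intro k
      calc ‖lam (a*b) (ξ k) - ξ k‖
          = ‖(lam a (lam b (ξ k)) - lam a (ξ k)) + (lam a (ξ k) - ξ k)‖ := by
            rw [lam_mul lam hlam, sub_add_sub_cancel]
      _ ≤ ‖lam a (lam b (ξ k)) - lam a (ξ k)‖ + ‖lam a (ξ k) - ξ k‖ := norm_add_le _ _
      _ = ‖lam b (ξ k) - ξ k‖ + ‖lam a (ξ k) - ξ k‖ := by
            rw [← map_sub, lam_norm lam hlam]
    have := (ihb.add iha)
    rw [add_zero] at this
    exact squeeze_zero (fun k => norm_nonneg _) key this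
  | inv a _ iha =>
    have : (fun k => ‖lam a⁻¹ (ξ k) - ξ k‖) = fun k => ‖lam a (ξ k) - ξ k‖ := by
      funext k; rw [lam_inv_norm lam hlam]
    rw [this]; exact iha
end lam

section lam2

variable (lam : G → (lp (fun _ : G => ℂ) 2 →L[ℂ] lp (fun _ : G => ℂ) 2))
  {n : ℕ} (g : Fin n → G)

lemma T_apply (ξ : H) :
    ((1 : H →L[ℂ] H) - ((n : ℂ))⁻¹ • ∑ i : Fin n, lam (g i)) ξ
      = ξ - ((n:ℂ))⁻¹ • ∑ i : Fin n, lam (g i) ξ := by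
  simp [ContinuousLinearMap.sub_apply, ContinuousLinearMap.smul_apply,
    ContinuousLinearMap.sum_apply]

variable (lam_norm : ∀ (a : G) (f : lp (fun _ : G => ℂ) 2), ‖lam a f‖ = ‖f‖)

include lam_norm

lemma key_ineq' (hn : 0 < n) (ξ : H) (hξ : ‖ξ‖ = 1) (i : Fin n) :
    ‖lam (g i) ξ - ξ‖ ^ 2
      ≤ 2 * n * (inner ℂ ((((1 : H →L[ℂ] H) - ((n : ℂ))⁻¹ • ∑ i : Fin n, lam (g i))) ξ) ξ : ℂ).re := by
  set T : H →L[ℂ] H := (1 : H →L[ℂ] H) - ((n : ℂ))⁻¹ • ∑ i : Fin n, lam (g i) with hT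
  set r : Fin n → ℝ := fun i => (inner ℂ (lam (g i) ξ) ξ : ℂ).re with hr
  have hr1 : ∀ j, r j ≤ 1 := by
    intro j
    calc r j ≤ ‖(inner ℂ (lam (g j) ξ) ξ : ℂ)‖ := Complex.re_le_norm _
      _ = ‖(inner ℂ (lam (g j) ξ) ξ : ℂ)‖ := rfl
      _ ≤ ‖lam (g j) ξ‖ * ‖ξ‖ := norm_inner_le_norm _ _
      _ = 1 := by rw [lam_norm, hξ, one_mul]
  have hsub : ∀ j, ‖lam (g j) ξ - ξ‖ ^ 2 = 2 - 2 * r j := by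
    intro j
    have h := @norm_sub_sq ℂ _ _ _ _ (lam (g j) ξ) ξ
    rw [lam_norm, hξ] at h
    rw [h, hr]
    simp only [RCLike.re_to_complex]
    ring
  have e1 : (inner ℂ (T ξ) ξ : ℂ) = inner ℂ ξ ξ - (n:ℂ)⁻¹ * ∑ j, inner ℂ (lam (g j) ξ) ξ := by
    rw [hT, T_apply, inner_sub_left, inner_smul_left, sum_inner]
    congr 2
    simp
  have e2 : (inner ℂ (T ξ) ξ : ℂ).re = 1 - (n:ℝ)⁻¹ * ∑ j, r j := by
    rw [e1]
    have hxx : (inner ℂ ξ ξ : ℂ) = 1 := by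
      rw [@inner_self_eq_norm_sq_to_K ℂ, hξ]; norm_num
    have hc : ((n:ℂ))⁻¹ = (((n:ℝ)⁻¹ : ℝ) : ℂ) := by push_cast; ring
    rw [hxx, hc, Complex.sub_re, Complex.one_re, Complex.re_ofReal_mul]
    congr 1
    rw [Complex.re_sum]
  have e4 : ∑ j, (1 - r j) = (n:ℝ) * (inner ℂ (T ξ) ξ : ℂ).re := by
    have hsum : ∑ j, (1 - r j) = (n:ℝ) * (1 - (n:ℝ)⁻¹ * ∑ j, r j) := by
      rw [Finset.sum_sub_distrib, Finset.sum_const, Finset.card_univ, Fintype.card_fin]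
      have hn' : (n:ℝ) ≠ 0 := Nat.cast_ne_zero.mpr hn.ne'
      field_simp
      rw [nsmul_eq_mul, mul_one]
    rw [hsum, ← e2]
  have e5 : 1 - r i ≤ ∑ j, (1 - r j) :=
    Finset.single_le_sum (f := fun j => 1 - r j) (fun j _ => sub_nonneg.mpr (hr1 j))
      (Finset.mem_univ i)
  rw [hsub i]
  nlinarith [e4, e5]

lemma key_ineq (hn : 0 < n) (ξ : H) (hξ : ‖ξ‖ = 1) (i : Fin n) :
    ‖lam (g i) ξ - ξ‖ ^ 2
      ≤ 2 * n * ‖((1 : H →L[ℂ] H) - ((n : ℂ))⁻¹ • ∑ i : Fin n, lam (g i)) ξ‖ := by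
  set T : H →L[ℂ] H := (1 : H →L[ℂ] H) - ((n : ℂ))⁻¹ • ∑ i : Fin n, lam (g i) with hT
  refine (key_ineq' lam g lam_norm hn ξ hξ i).trans ?_
  have e3 : (inner ℂ (T ξ) ξ : ℂ).re ≤ ‖T ξ‖ := by
    calc (inner ℂ (T ξ) ξ : ℂ).re ≤ ‖(inner ℂ (T ξ) ξ : ℂ)‖ := Complex.re_le_norm _
      _ = ‖(inner ℂ (T ξ) ξ : ℂ)‖ := rfl
      _ ≤ ‖T ξ‖ * ‖ξ‖ := norm_inner_le_norm _ _
      _ = ‖T ξ‖ := by rw [hξ, mul_one]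
  have : (0:ℝ) ≤ 2 * n := by positivity
  nlinarith

lemma almost_inv_seq (hn : 0 < n)
    (hTu : ¬ IsUnit ((1 : H →L[ℂ] H) - ((n : ℂ))⁻¹ • ∑ i : Fin n, lam (g i))) :
    ∃ ξ : ℕ → H, (∀ k, ‖ξ k‖ = 1) ∧
      ∀ i : Fin n, Filter.Tendsto (fun k => ‖lam (g i) (ξ k) - ξ k‖)
        Filter.atTop (nhds 0) := by
  set T : H →L[ℂ] H := (1 : H →L[ℂ] H) - ((n : ℂ))⁻¹ • ∑ i : Fin n, lam (g i) with hT
  by_cases hlb : ∀ ε > (0:ℝ), ∃ ξ : H, ‖ξ‖ = 1 ∧ ‖T ξ‖ < ε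
  · choose ξ h1 h2 using fun k : ℕ => hlb (1/(k+1)) (by positivity)
    refine ⟨ξ, h1, fun i => ?_⟩
    have hsq : ∀ k, ‖lam (g i) (ξ k) - ξ k‖^2 ≤ 2*(n:ℝ)*(1/(k+1)) := by
      intro k
      refine (key_ineq lam g lam_norm hn (ξ k) (h1 k) i).trans ?_
      have := (h2 k).le
      have h2n : (0:ℝ) ≤ 2 * n := by positivity
      nlinarith
    have h0 : Filter.Tendsto (fun k : ℕ => 2*(n:ℝ)*(1/(k+1))) Filter.atTop (nhds 0) := by
      have h00 := tendsto_one_div_add_atTop_nhds_zero_nat (𝕜 := ℝ)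
      have := h00.const_mul (2*(n:ℝ))
      simpa using this
    have hsq0 : Filter.Tendsto (fun k => ‖lam (g i) (ξ k) - ξ k‖^2) Filter.atTop (nhds 0) :=
      squeeze_zero (fun k => sq_nonneg _) hsq h0
    have hs := hsq0.sqrt
    simpa [Real.sqrt_sq (norm_nonneg _)] using hs
  · push_neg at hlb
    obtain ⟨ε, hε, hbdd⟩ := hlb
    have hbelow : ∀ x : H, ‖x‖ ≤ ε⁻¹ * ‖T x‖ := by
      intro x
      rcases eq_or_ne x 0 with rfl | hx
      · simp
      · have hx' : (0:ℝ) < ‖x‖ := norm_pos_iff.mpr hx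
        have h1 : ‖((‖x‖⁻¹ : ℝ) : ℂ) • x‖ = 1 := by
          rw [norm_smul, Complex.norm_real, Real.norm_of_nonneg (by positivity)]
          field_simp
        have h2 := hbdd _ h1
        rw [map_smul, norm_smul, Complex.norm_real, Real.norm_of_nonneg (by positivity)] at h2
        have hx0 : ‖x‖ * ‖x‖⁻¹ = 1 := mul_inv_cancel₀ hx'.ne'
        have hε0 : ε * ε⁻¹ = 1 := mul_inv_cancel₀ hε.ne'
        nlinarith [mul_le_mul_of_nonneg_left h2 hx'.le, hx0, hε0,
          inv_pos.mpr hε, norm_nonneg (T x)]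
    have hanti := ContinuousLinearMap.antilipschitz_of_bound T (K := Real.toNNReal ε⁻¹)
      (fun x => by rw [Real.coe_toNNReal _ (by positivity)]; exact hbelow x)
    have hclosed : IsClosed (Set.range T) := hanti.isClosed_range T.uniformContinuous
    have hne : (LinearMap.range (T : H →ₗ[ℂ] H)).topologicalClosure ≠ ⊤ := by
      intro htop
      apply hTu
      rw [ContinuousLinearMap.isUnit_iff_bijective]
      refine ⟨hanti.injective, fun y => ?_⟩
      have h2 := congrArg (fun K : Submodule ℂ (lp (fun _ : G => ℂ) 2) =>
        (K : Set (lp (fun _ : G => ℂ) 2))) htop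
      simp only [Submodule.topologicalClosure_coe, Submodule.top_coe] at h2
      rw [LinearMap.coe_range, ContinuousLinearMap.coe_coe, hclosed.closure_eq] at h2
      have : y ∈ Set.range ⇑T := by rw [h2]; trivial
      exact this
    have horth : (LinearMap.range (T : H →ₗ[ℂ] H))ᗮ ≠ ⊥ := by
      intro hbot
      apply hne
      rw [← Submodule.orthogonal_orthogonal_eq_closure, hbot,
        Submodule.bot_orthogonal_eq_top]
    obtain ⟨η0, hmem, hη0⟩ := Submodule.exists_mem_ne_zero_of_ne_bot horth
    have hη0' : (0:ℝ) < ‖η0‖ := norm_pos_iff.mpr hη0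
    set η : H := ((‖η0‖⁻¹ : ℝ) : ℂ) • η0 with hηdef
    have hηn : ‖η‖ = 1 := by
      rw [hηdef, norm_smul, Complex.norm_real, Real.norm_of_nonneg (by positivity)]
      field_simp
    have hTη : (inner ℂ (T η) η : ℂ) = 0 := by
      have h0 : (inner ℂ (T η) η0 : ℂ) = 0 := by
        have := (Submodule.mem_orthogonal _ η0).mp hmem (T η) (LinearMap.mem_range_self _ _)
        exact this
      rw [hηdef, inner_smul_right, h0, mul_zero]
    have hzero : ∀ i : Fin n, ‖lam (g i) η - η‖ = 0 := by
      intro i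
      have := key_ineq' lam g lam_norm hn η hηn i
      rw [← hT, hTη] at this
      simp only [Complex.zero_re, mul_zero] at this
      have h2 := sq_nonneg ‖lam (g i) η - η‖
      have : ‖lam (g i) η - η‖ ^ 2 = 0 := le_antisymm this h2
      nlinarith [norm_nonneg (lam (g i) η - η)]
    refine ⟨fun _ => η, fun _ => hηn, fun i => ?_⟩
    simp only [hzero i]
    exact tendsto_const_nhds


end lam2

section mean

variable (lam : G → (lp (fun _ : G => ℂ) 2 →L[ℂ] lp (fun _ : G => ℂ) 2))
  (hlam : ∀ (x : G) (f : lp (fun _ : G => ℂ) 2) (y : G),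
    (lam x f : ∀ _ : G, ℂ) y = f (x⁻¹ * y))
  (lam_norm : ∀ (a : G) (f : lp (fun _ : G => ℂ) 2), ‖lam a f‖ = ‖f‖)

lemma summable_mul_norm (u v : H) :
    Summable fun x => ‖(u : G → ℂ) x‖ * ‖(v : G → ℂ) x‖ := by
  refine Summable.of_nonneg_of_le (fun x => by positivity) (fun x => ?_)
    ((summable_norm_sq u).add (summable_norm_sq v))
  nlinarith [norm_nonneg ((u : G → ℂ) x), norm_nonneg ((v : G → ℂ) x),
    sq_nonneg (‖(u : G → ℂ) x‖ - ‖(v : G → ℂ) x‖)]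

include hlam lam_norm in
lemma mean_of_seq (ξ : ℕ → H) (hnorm : ∀ k, ‖ξ k‖ = 1)
    (hinv : ∀ a : G, Tendsto (fun k => ‖lam a (ξ k) - ξ k‖) atTop (𝓝 0)) :
    IsAmenable G := by
  classical
  set w : ℕ → G → ℝ := fun k x => ‖(ξ k : G → ℂ) x‖ ^ 2 with hw
  have hw_sum : ∀ k, Summable (w k) := fun k => summable_norm_sq (ξ k)
  have hw_nonneg : ∀ k x, 0 ≤ w k x := fun k x => sq_nonneg _
  have hw_one : ∀ k, ∑' x, w k x = 1 := by
    intro k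
    have h := norm_sq_eq (ξ k)
    rw [hnorm k] at h
    simpa using h.symm
  have hsum : ∀ (k : ℕ) (f : G → ℂ) (C : ℝ), (∀ x, ‖f x‖ ≤ C) →
      Summable (fun x => ((w k x : ℝ) : ℂ) * f x) := by
    intro k f C hC
    refine Summable.of_norm (Summable.of_nonneg_of_le (fun x => norm_nonneg _) (fun x => ?_)
      ((hw_sum k).mul_right C))
    rw [norm_mul, Complex.norm_real, Real.norm_of_nonneg (hw_nonneg k x)]
    exact mul_le_mul_of_nonneg_left (hC x) (hw_nonneg k x)
  set a : ℕ → boundedFuns G → ℂ :=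
    fun k f => ∑' x, ((w k x : ℝ) : ℂ) * (f : G → ℂ) x with ha
  have habd : ∀ (k : ℕ) (f : boundedFuns G) (C : ℝ), (∀ x, ‖(f : G → ℂ) x‖ ≤ C) →
      ‖a k f‖ ≤ C := by
    intro k f C hC
    have hns : Summable (fun x => ‖((w k x : ℝ) : ℂ) * (f : G → ℂ) x‖) := by
      refine Summable.of_nonneg_of_le (fun x => norm_nonneg _) (fun x => ?_)
        ((hw_sum k).mul_right C)
      rw [norm_mul, Complex.norm_real, Real.norm_of_nonneg (hw_nonneg k x)]
      exact mul_le_mul_of_nonneg_left (hC x) (hw_nonneg k x)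
    calc ‖a k f‖ ≤ ∑' x, ‖((w k x : ℝ) : ℂ) * (f : G → ℂ) x‖ := norm_tsum_le_tsum_norm hns
      _ ≤ ∑' x, w k x * C := by
          refine Summable.tsum_le_tsum (fun x => ?_) hns ((hw_sum k).mul_right C)
          rw [norm_mul, Complex.norm_real, Real.norm_of_nonneg (hw_nonneg k x)]
          exact mul_le_mul_of_nonneg_left (hC x) (hw_nonneg k x)
      _ = (∑' x, w k x) * C := tsum_mul_right
      _ = C := by rw [hw_one k, one_mul]
  set U : Ultrafilter ℕ := Ultrafilter.of atTop with hU
  have hUle : (U : Filter ℕ) ≤ atTop := Ultrafilter.of_le _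
  haveI : (U : Filter ℕ).NeBot := U.neBot
  have hex : ∀ f : boundedFuns G, ∃ z : ℂ, Tendsto (fun k => a k f) U (𝓝 z) := by
    intro f
    obtain ⟨C, hC⟩ := f.2
    have hcpt : IsCompact (Metric.closedBall (0 : ℂ) C) := isCompact_closedBall _ _
    have hle : (Ultrafilter.map (fun k => a k f) U : Filter ℂ) ≤
        Filter.principal (Metric.closedBall (0 : ℂ) C) := by
      refine Filter.le_principal_iff.mpr (Filter.mem_map.mpr (Filter.univ_mem' fun k => ?_))
      simp only [Set.mem_preimage, Metric.mem_closedBall, dist_zero_right]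
      exact habd k f C hC
    obtain ⟨z, _, hz⟩ := hcpt.ultrafilter_le_nhds (Ultrafilter.map (fun k => a k f) U) hle
    exact ⟨z, hz⟩
  choose mfun hmfun using hex
  have ha_add : ∀ (k : ℕ) (f f' : boundedFuns G), a k (f + f') = a k f + a k f' := by
    intro k f f'
    obtain ⟨Cf, hCf⟩ := f.2
    obtain ⟨Cg, hCg⟩ := f'.2
    have h1 := hsum k (f : G → ℂ) Cf hCf
    have h2 := hsum k (f' : G → ℂ) Cg hCg
    have hx : ∀ x, ((w k x : ℝ) : ℂ) * ((f + f' : boundedFuns G) : G → ℂ) x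
        = ((w k x : ℝ) : ℂ) * (f : G → ℂ) x + ((w k x : ℝ) : ℂ) * (f' : G → ℂ) x := by
      intro x
      have hv : ((f + f' : boundedFuns G) : G → ℂ) x = (f : G → ℂ) x + (f' : G → ℂ) x := rfl
      rw [hv]; ring
    show (∑' x, ((w k x : ℝ) : ℂ) * ((f + f' : boundedFuns G) : G → ℂ) x) = _
    simp only [hx]
    exact Summable.tsum_add h1 h2
  have ha_smul : ∀ (k : ℕ) (c : ℂ) (f : boundedFuns G), a k (c • f) = c * a k f := by
    intro k c f
    have hx : ∀ x, ((w k x : ℝ) : ℂ) * ((c • f : boundedFuns G) : G → ℂ) x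
        = c * (((w k x : ℝ) : ℂ) * (f : G → ℂ) x) := by
      intro x
      have hv : ((c • f : boundedFuns G) : G → ℂ) x = c * (f : G → ℂ) x := rfl
      rw [hv]; ring
    show (∑' x, ((w k x : ℝ) : ℂ) * ((c • f : boundedFuns G) : G → ℂ) x) = _
    simp only [hx]
    exact tsum_mul_left
  set m : boundedFuns G →ₗ[ℂ] ℂ :=
    { toFun := mfun
      map_add' := fun f f' => by
        have h1 : Tendsto (fun k => a k (f + f')) (U : Filter ℕ) (𝓝 (mfun f + mfun f')) := by
          have h2 := (hmfun f).add (hmfun f')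
          simpa only [← ha_add] using h2
        exact tendsto_nhds_unique (hmfun (f + f')) h1
      map_smul' := fun c f => by
        have h1 : Tendsto (fun k => a k (c • f)) (U : Filter ℕ) (𝓝 (c * mfun f)) := by
          have h2 := (hmfun f).const_mul c
          simpa only [← ha_smul] using h2
        simpa using tendsto_nhds_unique (hmfun (c • f)) h1 } with hm
  refine ⟨m, ?_, ?_, ?_⟩
  · set e1 : boundedFuns G := ⟨fun _ => 1, 1, fun _ => by simp⟩ with he1
    have h1 : ∀ k, a k e1 = 1 := by
      intro k
      have hx : ∀ x, ((w k x : ℝ) : ℂ) * (e1 : G → ℂ) x = Complex.ofRealCLM (w k x) := by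
        intro x
        have hv : (e1 : G → ℂ) x = 1 := rfl
        rw [hv, mul_one]; rfl
      show (∑' x, ((w k x : ℝ) : ℂ) * (e1 : G → ℂ) x) = 1
      simp only [hx]
      rw [← Complex.ofRealCLM.map_tsum (hw_sum k), hw_one k]
      simp
    have h2 : Tendsto (fun k => a k e1) (U : Filter ℕ) (𝓝 1) := by
      simp only [h1]; exact tendsto_const_nhds
    exact tendsto_nhds_unique (hmfun e1) h2
  · intro f hf
    choose r hr0 hrval using hf
    obtain ⟨C, hC⟩ := f.2
    have hrC : ∀ x, r x ≤ C := by
      intro x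
      have := hC x
      rw [hrval x, Complex.norm_real, Real.norm_of_nonneg (hr0 x)] at this
      exact this
    have hmem : ∀ k, a k f ∈ {z : ℂ | 0 ≤ z.re ∧ z.im = 0} := by
      intro k
      have hsr : Summable (fun x => w k x * r x) := by
        refine Summable.of_nonneg_of_le (fun x => mul_nonneg (hw_nonneg k x) (hr0 x))
          (fun x => mul_le_mul_of_nonneg_left (hrC x) (hw_nonneg k x))
          ((hw_sum k).mul_right C)
      have hterm : ∀ x, ((w k x : ℝ) : ℂ) * (f : G → ℂ) x
          = Complex.ofRealCLM (w k x * r x) := by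
        intro x
        rw [hrval x, Complex.ofRealCLM_apply, Complex.ofReal_mul]
      show (∑' x, ((w k x : ℝ) : ℂ) * (f : G → ℂ) x) ∈ _
      simp only [hterm]
      rw [← Complex.ofRealCLM.map_tsum hsr]
      constructor
      · simp only [Complex.ofRealCLM_apply, Complex.ofReal_re]
        exact tsum_nonneg (fun x => mul_nonneg (hw_nonneg k x) (hr0 x))
      · simp
    have hSclosed : IsClosed {z : ℂ | 0 ≤ z.re ∧ z.im = 0} :=
      (isClosed_le continuous_const Complex.continuous_re).inter
        (isClosed_eq Complex.continuous_im continuous_const)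
    have hmS : m f ∈ {z : ℂ | 0 ≤ z.re ∧ z.im = 0} :=
      hSclosed.mem_of_tendsto (hmfun f) (Filter.Eventually.of_forall hmem)
    refine ⟨(m f).re, hmS.1, ?_⟩
    exact (Complex.ext (by simp) (by simpa using hmS.2.symm)).symm
  · intro gg f
    obtain ⟨C, hC⟩ := f.2
    have hC0 : (0:ℝ) ≤ C := le_trans (norm_nonneg _) (hC 1)
    set ftr : boundedFuns G := ⟨fun x => (f : G → ℂ) (gg⁻¹ * x), ⟨C, fun x => hC _⟩⟩ with hftr
    set η : ℕ → H := fun k => lam gg⁻¹ (ξ k) with hη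
    have hηn : ∀ k, ‖η k‖ = 1 := fun k => by rw [hη, lam_norm]; exact hnorm k
    have hηx : ∀ k x, (η k : G → ℂ) x = (ξ k : G → ℂ) (gg * x) := by
      intro k x
      rw [hη, hlam]
      simp
    have hwsum2 : ∀ k, Summable (fun x => w k (gg * x)) :=
      fun k => ((Equiv.mulLeft gg).summable_iff).mpr (hw_sum k)
    have hre : ∀ k, a k ftr = ∑' x, ((w k (gg * x) : ℝ) : ℂ) * (f : G → ℂ) x := by
      intro k
      have h0 : a k ftr = ∑' x, ((w k x : ℝ) : ℂ) * (ftr : G → ℂ) x := rfl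
      rw [h0, ← Equiv.tsum_eq (Equiv.mulLeft gg)
        (fun x => ((w k x : ℝ) : ℂ) * (ftr : G → ℂ) x)]
      congr 1
      funext y
      have hv : (ftr : G → ℂ) ((Equiv.mulLeft gg) y) = (f : G → ℂ) y := by
        show (f : G → ℂ) (gg⁻¹ * (gg * y)) = (f : G → ℂ) y
        rw [inv_mul_cancel_left]
      rw [hv]
      rfl
    have hdiff : ∀ k, ‖a k ftr - a k f‖ ≤ 2 * C * ‖η k - ξ k‖ := by
      intro k
      have hsubx : ∀ x, ‖((η k - ξ k : H) : G → ℂ) x‖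
          = ‖(η k : G → ℂ) x - (ξ k : G → ℂ) x‖ := by
        intro x
        rw [lp.coeFn_sub]
        rfl
      have hpt : ∀ x, ‖(((w k (gg * x) : ℝ) : ℂ) - ((w k x : ℝ) : ℂ)) * (f : G → ℂ) x‖
          ≤ (‖(η k : G → ℂ) x‖ * ‖((η k - ξ k : H) : G → ℂ) x‖
             + ‖(ξ k : G → ℂ) x‖ * ‖((η k - ξ k : H) : G → ℂ) x‖) * C := by
        intro x
        rw [norm_mul]
        have h1 : (((w k (gg * x) : ℝ) : ℂ) - ((w k x : ℝ) : ℂ))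
            = (((w k (gg * x) - w k x : ℝ)) : ℂ) := by push_cast; ring
        rw [h1, Complex.norm_real]
        have h2 : ‖w k (gg * x) - w k x‖ ≤ ‖(η k : G → ℂ) x‖ * ‖((η k - ξ k : H) : G → ℂ) x‖
            + ‖(ξ k : G → ℂ) x‖ * ‖((η k - ξ k : H) : G → ℂ) x‖ := by
          rw [Real.norm_eq_abs, hsubx x]
          have e1 : w k (gg * x) = ‖(η k : G → ℂ) x‖ ^ 2 := by rw [hηx k x]
          have e2 : w k x = ‖(ξ k : G → ℂ) x‖ ^ 2 := rfl
          rw [e1, e2]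
          have habs : |‖(η k : G → ℂ) x‖ - ‖(ξ k : G → ℂ) x‖|
              ≤ ‖(η k : G → ℂ) x - (ξ k : G → ℂ) x‖ := abs_norm_sub_norm_le _ _
          have hA : (0:ℝ) ≤ ‖(η k : G → ℂ) x‖ := norm_nonneg _
          have hB : (0:ℝ) ≤ ‖(ξ k : G → ℂ) x‖ := norm_nonneg _
          calc |‖(η k : G → ℂ) x‖ ^ 2 - ‖(ξ k : G → ℂ) x‖ ^ 2|
              = (‖(η k : G → ℂ) x‖ + ‖(ξ k : G → ℂ) x‖)
                * |‖(η k : G → ℂ) x‖ - ‖(ξ k : G → ℂ) x‖| := by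
                rw [← abs_of_nonneg (by positivity :
                  (0:ℝ) ≤ ‖(η k : G → ℂ) x‖ + ‖(ξ k : G → ℂ) x‖), ← abs_mul]
                congr 1
                ring
            _ ≤ (‖(η k : G → ℂ) x‖ + ‖(ξ k : G → ℂ) x‖)
                * ‖(η k : G → ℂ) x - (ξ k : G → ℂ) x‖ :=
                mul_le_mul_of_nonneg_left habs (by positivity)
            _ = ‖(η k : G → ℂ) x‖ * ‖(η k : G → ℂ) x - (ξ k : G → ℂ) x‖
                + ‖(ξ k : G → ℂ) x‖ * ‖(η k : G → ℂ) x - (ξ k : G → ℂ) x‖ := by ring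
        exact mul_le_mul h2 (hC x) (norm_nonneg _) (by positivity)
      have hsumA : Summable (fun x => ‖(η k : G → ℂ) x‖ * ‖((η k - ξ k : H) : G → ℂ) x‖) :=
        summable_mul_norm _ _
      have hsumB : Summable (fun x => ‖(ξ k : G → ℂ) x‖ * ‖((η k - ξ k : H) : G → ℂ) x‖) :=
        summable_mul_norm _ _
      have hsumbound := (hsumA.add hsumB).mul_right C
      have hsum1 : Summable (fun x => ((w k (gg * x) : ℝ) : ℂ) * (f : G → ℂ) x) := by
        refine Summable.of_norm (Summable.of_nonneg_of_le (fun x => norm_nonneg _)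
          (fun x => ?_) ((hwsum2 k).mul_right C))
        rw [norm_mul, Complex.norm_real, Real.norm_of_nonneg (hw_nonneg k _)]
        exact mul_le_mul_of_nonneg_left (hC x) (hw_nonneg k _)
      have hsum0 := hsum k (f : G → ℂ) C hC
      have heq : a k ftr - a k f
          = ∑' x, (((w k (gg * x) : ℝ) : ℂ) - ((w k x : ℝ) : ℂ)) * (f : G → ℂ) x := by
        have h0 : a k f = ∑' x, ((w k x : ℝ) : ℂ) * (f : G → ℂ) x := rfl
        rw [hre k, h0, ← Summable.tsum_sub hsum1 hsum0]
        congr 1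
        funext x
        ring
      have hnsum : Summable
          (fun x => ‖(((w k (gg * x) : ℝ) : ℂ) - ((w k x : ℝ) : ℂ)) * (f : G → ℂ) x‖) :=
        Summable.of_nonneg_of_le (fun x => norm_nonneg _) hpt hsumbound
      rw [heq]
      calc ‖∑' x, (((w k (gg * x) : ℝ) : ℂ) - ((w k x : ℝ) : ℂ)) * (f : G → ℂ) x‖
          ≤ ∑' x, ‖(((w k (gg * x) : ℝ) : ℂ) - ((w k x : ℝ) : ℂ)) * (f : G → ℂ) x‖ :=
            norm_tsum_le_tsum_norm hnsum
        _ ≤ ∑' x, (‖(η k : G → ℂ) x‖ * ‖((η k - ξ k : H) : G → ℂ) x‖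
             + ‖(ξ k : G → ℂ) x‖ * ‖((η k - ξ k : H) : G → ℂ) x‖) * C :=
            Summable.tsum_le_tsum hpt hnsum hsumbound
        _ = (∑' x, (‖(η k : G → ℂ) x‖ * ‖((η k - ξ k : H) : G → ℂ) x‖
             + ‖(ξ k : G → ℂ) x‖ * ‖((η k - ξ k : H) : G → ℂ) x‖)) * C := tsum_mul_right
        _ = ((∑' x, ‖(η k : G → ℂ) x‖ * ‖((η k - ξ k : H) : G → ℂ) x‖)
             + ∑' x, ‖(ξ k : G → ℂ) x‖ * ‖((η k - ξ k : H) : G → ℂ) x‖) * C := by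
            rw [Summable.tsum_add hsumA hsumB]
        _ ≤ (‖η k‖ * ‖η k - ξ k‖ + ‖ξ k‖ * ‖η k - ξ k‖) * C :=
            mul_le_mul_of_nonneg_right
              (add_le_add (tsum_mul_norm_le _ _) (tsum_mul_norm_le _ _)) hC0
        _ = 2 * C * ‖η k - ξ k‖ := by rw [hηn k, hnorm k]; ring
    have hrhs : Tendsto (fun k => 2 * C * ‖η k - ξ k‖) atTop (𝓝 0) := by
      have h1 : Tendsto (fun k => ‖η k - ξ k‖) atTop (𝓝 0) := hinv gg⁻¹
      have h2 := h1.const_mul (2 * C)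
      simpa using h2
    have h0 : Tendsto (fun k => a k ftr - a k f) atTop (𝓝 0) := squeeze_zero_norm hdiff hrhs
    have h0U : Tendsto (fun k => a k ftr - a k f) (U : Filter ℕ) (𝓝 0) := h0.mono_left hUle
    have h2 := tendsto_nhds_unique ((hmfun ftr).sub (hmfun f)) h0U
    exact sub_eq_zero.mp h2

end mean


lemma memℓp_fin_c {p : ℝ≥0∞} (hp : 0 < p.toReal) (f : G → ℝ)
    (hf : (Function.support f).Finite) :
    Memℓp (fun x => (f x : ℂ)) p := by
  refine memℓp_gen (summable_of_ne_finset_zero (s := hf.toFinset) fun x hx => ?_)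
  have h0 : f x = 0 := Function.notMem_support.mp (fun h => hx (hf.mem_toFinset.2 h))
  simp [h0, Real.zero_rpow hp.ne']

lemma memℓp_fin_r {p : ℝ≥0∞} (hp : 0 < p.toReal) (f : G → ℝ)
    (hf : (Function.support f).Finite) : Memℓp f p := by
  refine memℓp_gen (summable_of_ne_finset_zero (s := hf.toFinset) fun x hx => ?_)
  have h0 : f x = 0 := Function.notMem_support.mp (fun h => hx (hf.mem_toFinset.2 h))
  simp [h0, Real.zero_rpow hp.ne']

lemma norm_lp1 (v : lp (fun _ : G => ℝ) 1) : ‖v‖ = ∑' x, |(v : G → ℝ) x| := by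
  have h := lp.norm_eq_tsum_rpow (p := 1) (by norm_num) v
  simpa [Real.norm_eq_abs] using h

open scoped Classical in
lemma lp_single_apply_const {p : ℝ≥0∞} {R : Type*} [NormedAddCommGroup R]
    (i : G) (a : R) (j : G) :
    (lp.single (E := fun _ : G => R) p i a : ∀ _ : G, R) j = if j = i then a else 0 := by
  rcases eq_or_ne j i with rfl | h
  · rw [lp.single_apply_self, if_pos rfl]
  · rw [lp.single_apply_ne _ _ _ h, if_neg h]

lemma finsupp_summable (q : G →₀ ℝ) : Summable (fun x => q x) :=
  summable_of_ne_finset_zero (s := q.support) fun x hx => Finsupp.notMem_support_iff.mp hx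

section fwd

variable (lam : G → (lp (fun _ : G => ℂ) 2 →L[ℂ] lp (fun _ : G => ℂ) 2))
  (hlam : ∀ (x : G) (f : lp (fun _ : G => ℂ) 2) (y : G),
    (lam x f : ∀ _ : G, ℂ) y = f (x⁻¹ * y))
  {n : ℕ} (g : Fin n → G)

include hlam in
lemma density_lower_bound (hn : 0 < n) (c : ℝ) (hc : 0 < c)
    (hbelow : ∀ ξ : lp (fun _ : G => ℂ) 2,
      ‖ξ‖ ≤ c * ‖((1 : H →L[ℂ] H) - ((n : ℂ))⁻¹ • ∑ i : Fin n, lam (g i)) ξ‖)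
    (q : G →₀ ℝ) (hq0 : ∀ x, 0 ≤ q x) (hq1 : ∑' x, q x = 1) :
    ∃ i : Fin n, (1/(2*c))^2 ≤ ∑' x, |q ((g i)⁻¹ * x) - q x| := by
  classical
  by_contra hcon
  push_neg at hcon
  set δ : ℝ := (1/(2*c))^2 with hδ
  have hδpos : 0 < δ := by positivity
  have hsqδ : Real.sqrt δ = 1/(2*c) := by
    rw [hδ, Real.sqrt_sq (by positivity)]
  -- the square-root vector
  have hsupp : (Function.support (fun x => Real.sqrt (q x))).Finite := by
    refine Set.Finite.subset q.support.finite_toSet (fun x hx => ?_)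
    simp only [Function.mem_support] at hx
    simp only [Finset.coe_sort_coe, Finset.mem_coe, Finsupp.mem_support_iff]
    intro h0
    exact hx (by rw [h0, Real.sqrt_zero])
  set ξp : lp (fun _ : G => ℂ) 2 :=
    ⟨fun x => ((Real.sqrt (q x) : ℝ) : ℂ), memℓp_fin_c (by norm_num) _ hsupp⟩ with hξp
  have hξpx : ∀ x, (ξp : G → ℂ) x = ((Real.sqrt (q x) : ℝ) : ℂ) := fun x => rfl
  have hξnorm : ‖ξp‖ = 1 := by
    have hsq : ‖ξp‖ ^ 2 = 1 := by
      rw [norm_sq_eq]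
      have : ∀ x, ‖(ξp : G → ℂ) x‖ ^ 2 = q x := by
        intro x
        rw [hξpx, Complex.norm_real, Real.norm_eq_abs, sq_abs, Real.sq_sqrt (hq0 x)]
      simp only [this]
      exact hq1
    rw [← Real.sqrt_sq (norm_nonneg ξp), hsq, Real.sqrt_one]
  -- Namioka estimate
  have hile : ∀ i : Fin n, ‖lam (g i) ξp - ξp‖ ≤ Real.sqrt δ := by
    intro i
    have hcoord : ∀ x, ((lam (g i) ξp - ξp : lp (fun _ : G => ℂ) 2) : G → ℂ) x
        = ((Real.sqrt (q ((g i)⁻¹ * x)) - Real.sqrt (q x) : ℝ) : ℂ) := by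
      intro x
      rw [lp.coeFn_sub, Pi.sub_apply, hlam, hξpx, hξpx]
      push_cast
      ring
    have hsummand : ∀ x, ‖((lam (g i) ξp - ξp : lp (fun _ : G => ℂ) 2) : G → ℂ) x‖ ^ 2
        ≤ |q ((g i)⁻¹ * x) - q x| := by
      intro x
      rw [hcoord, Complex.norm_real, Real.norm_eq_abs, sq_abs]
      exact sqrt_sub_sq_le (hq0 _) (hq0 _)
    have hrhs_sum : Summable (fun x => |q ((g i)⁻¹ * x) - q x|) := by
      refine summable_of_ne_finset_zero
        (s := q.support.image (fun z => g i * z) ∪ q.support) fun x hx => ?_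
      simp only [Finset.mem_union, Finset.mem_image, Finsupp.mem_support_iff] at hx
      push_neg at hx
      have h1 : q x = 0 := hx.2
      have h2 : q ((g i)⁻¹ * x) = 0 := by
        by_contra h2
        exact (hx.1 ((g i)⁻¹ * x) h2) (by group)
      rw [h1, h2]
      simp
    have hsq : ‖lam (g i) ξp - ξp‖ ^ 2 ≤ δ := by
      rw [norm_sq_eq]
      refine le_trans (Summable.tsum_le_tsum hsummand (summable_norm_sq _) hrhs_sum) ?_
      exact (hcon i).le
    calc ‖lam (g i) ξp - ξp‖ = Real.sqrt (‖lam (g i) ξp - ξp‖ ^ 2) :=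
          (Real.sqrt_sq (norm_nonneg _)).symm
      _ ≤ Real.sqrt δ := Real.sqrt_le_sqrt hsq
  -- operator bound
  set T : H →L[ℂ] H := (1 : H →L[ℂ] H) - ((n : ℂ))⁻¹ • ∑ i : Fin n, lam (g i) with hT
  have hTeq : T ξp = ((n:ℂ))⁻¹ • ∑ i : Fin n, (ξp - lam (g i) ξp) := by
    have h1 : T ξp = ξp - ((n:ℂ))⁻¹ • ∑ i : Fin n, lam (g i) ξp := by
      simp [hT, ContinuousLinearMap.sub_apply, ContinuousLinearMap.smul_apply,
        ContinuousLinearMap.sum_apply]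
    rw [h1, Finset.sum_sub_distrib, smul_sub, Finset.sum_const, Finset.card_univ,
      Fintype.card_fin]
    have h2 : ((n:ℂ))⁻¹ • (n • ξp) = ξp := by
      rw [← Nat.cast_smul_eq_nsmul ℂ, smul_smul, inv_mul_cancel₀
        (Nat.cast_ne_zero.mpr hn.ne'), one_smul]
    rw [h2]
  have hTle : ‖T ξp‖ ≤ Real.sqrt δ := by
    rw [hTeq, norm_smul]
    have h3 : ‖((n:ℂ))⁻¹‖ = (n:ℝ)⁻¹ := by
      rw [norm_inv, Complex.norm_natCast]
    rw [h3]
    have h4 : ‖∑ i : Fin n, (ξp - lam (g i) ξp)‖ ≤ (n:ℝ) * Real.sqrt δ := by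
      refine le_trans (norm_sum_le _ _) ?_
      have h5 : ∀ i : Fin n, ‖ξp - lam (g i) ξp‖ ≤ Real.sqrt δ := fun i => by
        rw [norm_sub_rev]; exact hile i
      calc ∑ i : Fin n, ‖ξp - lam (g i) ξp‖ ≤ ∑ _i : Fin n, Real.sqrt δ :=
            Finset.sum_le_sum (fun i _ => h5 i)
        _ = (n:ℝ) * Real.sqrt δ := by
            rw [Finset.sum_const, Finset.card_univ, Fintype.card_fin, nsmul_eq_mul]
    calc (n:ℝ)⁻¹ * ‖∑ i : Fin n, (ξp - lam (g i) ξp)‖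
        ≤ (n:ℝ)⁻¹ * ((n:ℝ) * Real.sqrt δ) := by
          refine mul_le_mul_of_nonneg_left h4 (by positivity)
      _ = Real.sqrt δ := by
          rw [← mul_assoc, inv_mul_cancel₀ (Nat.cast_ne_zero.mpr hn.ne'), one_mul]
  have := hbelow ξp
  rw [hξnorm] at this
  have hfinal : (1:ℝ) ≤ c * Real.sqrt δ :=
    le_trans this (mul_le_mul_of_nonneg_left hTle hc.le)
  rw [hsqδ] at hfinal
  have h2c : c * (1/(2*c)) = 1/2 := by
    rw [mul_one_div, div_eq_div_iff (by positivity) (by norm_num)]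
    ring
  rw [h2c] at hfinal
  linarith

include hlam in
lemma forward (hn : 0 < n)
    (hUnit : IsUnit ((1 : H →L[ℂ] H) - ((n : ℂ))⁻¹ • ∑ i : Fin n, lam (g i))) :
    ¬ IsAmenable G := by
  classical
  rintro ⟨m, hm1, hmpos, hminv⟩
  set T : H →L[ℂ] H := (1 : H →L[ℂ] H) - ((n : ℂ))⁻¹ • ∑ i : Fin n, lam (g i) with hT
  obtain ⟨u, hu⟩ := hUnit
  set c : ℝ := ‖(↑u⁻¹ : H →L[ℂ] H)‖ + 1 with hc
  have hcpos : 0 < c := by positivity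
  have hbelow : ∀ ξ : lp (fun _ : G => ℂ) 2, ‖ξ‖ ≤ c * ‖T ξ‖ := by
    intro ξ
    have h1 : (↑u⁻¹ : H →L[ℂ] H) (T ξ) = ξ := by
      rw [← hu]
      have h2 : (↑u⁻¹ : H →L[ℂ] H) ((↑u : H →L[ℂ] H) ξ)
          = ((↑u⁻¹ * ↑u : H →L[ℂ] H)) ξ := rfl
      rw [h2, Units.inv_mul]
      rfl
    calc ‖ξ‖ = ‖(↑u⁻¹ : H →L[ℂ] H) (T ξ)‖ := by rw [h1]
      _ ≤ ‖(↑u⁻¹ : H →L[ℂ] H)‖ * ‖T ξ‖ := ContinuousLinearMap.le_opNorm _ _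
      _ ≤ c * ‖T ξ‖ := by
          refine mul_le_mul_of_nonneg_right ?_ (norm_nonneg _)
          rw [hc]; linarith
  set δ : ℝ := (1/(2*c))^2 with hδ
  have hδpos : 0 < δ := by positivity
  have hΦmem : ∀ (q : G →₀ ℝ) (i : Fin n),
      Memℓp (fun x => q ((g i)⁻¹ * x) - q x) (1 : ℝ≥0∞) := by
    intro q i
    refine memℓp_fin_r (by norm_num) _ ?_
    refine Set.Finite.subset (Set.Finite.union
      ((q.support.finite_toSet).image (fun z => g i * z)) q.support.finite_toSet)
      (fun x hx => ?_)
    simp only [Function.mem_support] at hx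
    by_cases h1 : q x = 0
    · have h2 : q ((g i)⁻¹ * x) ≠ 0 := by
        intro h2
        exact hx (by rw [h1, h2, sub_zero])
      left
      exact ⟨(g i)⁻¹ * x, by simpa [Finsupp.mem_support_iff] using h2, by group⟩
    · right
      simpa [Finsupp.mem_support_iff] using h1
  set Φ : (G →₀ ℝ) → (Fin n → lp (fun _ : G => ℝ) 1) := fun q i =>
    ⟨fun x => q ((g i)⁻¹ * x) - q x, hΦmem q i⟩ with hΦ
  have hΦx : ∀ q i x, ((Φ q i : lp (fun _ : G => ℝ) 1) : G → ℝ) x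
      = q ((g i)⁻¹ * x) - q x := fun q i x => rfl
  set P : Set (G →₀ ℝ) := {q | (∀ x, 0 ≤ q x) ∧ ∑' x, q x = 1} with hP
  set Cs : Set (Fin n → lp (fun _ : G => ℝ) 1) := Φ '' P with hCs
  have hΦaff : ∀ (s t : ℝ) (q1 q2 : G →₀ ℝ),
      Φ (s • q1 + t • q2) = s • Φ q1 + t • Φ q2 := by
    intro s t q1 q2
    funext i
    apply lp.ext
    funext x
    have hr : ((s • Φ q1 + t • Φ q2) i : G → ℝ) x
        = s * ((Φ q1 i : G → ℝ) x) + t * ((Φ q2 i : G → ℝ) x) := by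
      have : (s • Φ q1 + t • Φ q2) i = s • (Φ q1 i) + t • (Φ q2 i) := rfl
      rw [this, lp.coeFn_add, Pi.add_apply, lp.coeFn_smul, lp.coeFn_smul]
      rfl
    rw [hr, hΦx, hΦx, hΦx]
    have h1 : ∀ z, (s • q1 + t • q2) z = s * q1 z + t * q2 z := by
      intro z
      simp [Finsupp.add_apply, Finsupp.smul_apply, smul_eq_mul]
    rw [h1, h1]
    ring
  have hconv : Convex ℝ Cs := by
    rintro a ⟨q1, hq1, rfl⟩ b ⟨q2, hq2, rfl⟩ s t hs ht hst
    refine ⟨s • q1 + t • q2, ⟨fun x => ?_, ?_⟩, (hΦaff s t q1 q2)⟩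
    · have : (s • q1 + t • q2) x = s * q1 x + t * q2 x := by
        simp [Finsupp.add_apply, Finsupp.smul_apply, smul_eq_mul]
      rw [this]
      exact add_nonneg (mul_nonneg hs (hq1.1 x)) (mul_nonneg ht (hq2.1 x))
    · have h1 : ∀ z, (s • q1 + t • q2) z = s * q1 z + t * q2 z := by
        intro z
        simp [Finsupp.add_apply, Finsupp.smul_apply, smul_eq_mul]
      have hs1 : Summable (fun z => s * q1 z) := (finsupp_summable q1).mul_left s
      have hs2 : Summable (fun z => t * q2 z) := (finsupp_summable q2).mul_left t
      calc ∑' z, (s • q1 + t • q2) z = ∑' z, (s * q1 z + t * q2 z) := by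
            exact tsum_congr h1
        _ = (∑' z, s * q1 z) + ∑' z, t * q2 z := Summable.tsum_add hs1 hs2
        _ = s * (∑' z, q1 z) + t * (∑' z, q2 z) := by rw [tsum_mul_left, tsum_mul_left]
        _ = 1 := by rw [hq1.2, hq2.2, mul_one, mul_one, hst]
  have hlow : ∀ z ∈ Cs, δ ≤ ‖z‖ := by
    rintro z ⟨q, hq, rfl⟩
    obtain ⟨i, hi⟩ := density_lower_bound lam hlam g hn c hcpos hbelow q hq.1 hq.2
    calc δ ≤ ∑' x, |q ((g i)⁻¹ * x) - q x| := hi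
      _ = ‖Φ q i‖ := by
          rw [norm_lp1]
      _ ≤ ‖Φ q‖ := norm_le_pi_norm (Φ q) i
  have h0notin : (0 : Fin n → lp (fun _ : G => ℝ) 1) ∉ closure Cs := by
    intro h0
    have hsub : closure Cs ⊆ {z | δ ≤ ‖z‖} :=
      closure_minimal hlow (isClosed_le continuous_const continuous_norm)
    have h1 := hsub h0
    simp only [Set.mem_setOf_eq, norm_zero] at h1
    linarith
  obtain ⟨fHB, uu, hfa, hfu⟩ := geometric_hahn_banach_closed_point
    hconv.closure isClosed_closure h0notin
  rw [map_zero] at hfu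
  set F : Fin n → G → ℝ := fun i x => fHB (Pi.single i (lp.single 1 x (1:ℝ))) with hF
  have hFbdd : ∀ i x, |F i x| ≤ ‖fHB‖ := by
    intro i x
    have hsn : ‖lp.single (E := fun _ : G => ℝ) 1 x (1:ℝ)‖ = 1 := by
      have h1 := lp.norm_single (E := fun _ : G => ℝ) (p := 1) (by norm_num)
        x (1:ℝ)
      simpa using h1
    have h1 : ‖(Pi.single i (lp.single 1 x (1:ℝ)) : Fin n → lp (fun _ : G => ℝ) 1)‖ ≤ 1 := by
      refine (pi_norm_le_iff_of_nonneg zero_le_one).mpr (fun j => ?_)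
      rcases eq_or_ne j i with rfl | h
      · rw [Pi.single_eq_same, hsn]
      · rw [Pi.single_eq_of_ne h]
        simp
    calc |F i x| = ‖fHB (Pi.single i (lp.single 1 x (1:ℝ)))‖ := (Real.norm_eq_abs _).symm
      _ ≤ ‖fHB‖ * 1 :=
          le_trans (fHB.le_opNorm _) (mul_le_mul_of_nonneg_left h1 (norm_nonneg _))
      _ = ‖fHB‖ := mul_one _
  have hδyP : ∀ y : G, (Finsupp.single y (1:ℝ)) ∈ P := by
    intro y
    refine ⟨fun x => ?_, ?_⟩
    · rw [Finsupp.single_apply]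
      split <;> norm_num
    · have h1 : (fun x => (Finsupp.single y (1:ℝ)) x) = fun x => if x = y then (1:ℝ) else 0 := by
        funext x
        rw [Finsupp.single_apply]
        exact if_congr eq_comm rfl rfl
      rw [show (∑' x, (Finsupp.single y (1:ℝ)) x) = ∑' x, if x = y then (1:ℝ) else 0 from
        tsum_congr fun x => by rw [Finsupp.single_apply]; exact if_congr eq_comm rfl rfl]
      exact tsum_ite_eq y 1
  have hdecomp : ∀ y : G, Φ (Finsupp.single y (1:ℝ))
      = ∑ i : Fin n, Pi.single i ((lp.single 1 (g i * y) (1:ℝ)) - lp.single 1 y 1) := by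
    intro y
    funext j
    rw [Finset.sum_apply]
    have hsp := Fintype.sum_pi_single (M := fun _ : Fin n => lp (fun _ : G => ℝ) 1) j
      (fun i => lp.single 1 (g i * y) (1:ℝ) - lp.single 1 y 1)
    rw [hsp]
    apply lp.ext
    funext x
    rw [hΦx, lp.coeFn_sub, Pi.sub_apply, lp_single_apply_const, lp_single_apply_const]
    rw [Finsupp.single_apply, Finsupp.single_apply]
    have hiff1 : (y = (g j)⁻¹ * x) ↔ (x = g j * y) := by
      constructor
      · intro h; rw [h]; group
      · intro h; rw [h]; group
    have hiff2 : (y = x) ↔ (x = y) := eq_comm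
    rw [if_congr hiff1 rfl rfl, if_congr hiff2 rfl rfl]
  have hPhiδ : ∀ y : G, fHB (Φ (Finsupp.single y 1)) = ∑ i : Fin n, (F i (g i * y) - F i y) := by
    intro y
    rw [hdecomp y, map_sum]
    congr 1
    funext i
    rw [show (Pi.single i (lp.single 1 (g i * y) (1:ℝ) - lp.single 1 y 1)
          : Fin n → lp (fun _ : G => ℝ) 1)
        = Pi.single i (lp.single 1 (g i * y) (1:ℝ)) - Pi.single i (lp.single 1 y 1) from
      Pi.single_sub i _ _]
    rw [map_sub]
  have hhy : ∀ y : G, ∑ i : Fin n, (F i (g i * y) - F i y) < uu := by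
    intro y
    rw [← hPhiδ y]
    exact hfa _ (subset_closure ⟨Finsupp.single y 1, hδyP y, rfl⟩)
  set Bf : Fin n → boundedFuns G := fun i => ⟨fun y => ((F i y : ℝ) : ℂ), ‖fHB‖, fun y => by
    rw [Complex.norm_real, Real.norm_eq_abs]; exact hFbdd i y⟩ with hBf
  set Af : Fin n → boundedFuns G := fun i => ⟨fun y => ((F i (g i * y) : ℝ) : ℂ), ‖fHB‖,
    fun y => by rw [Complex.norm_real, Real.norm_eq_abs]; exact hFbdd i _⟩ with hAf
  have hmAB : ∀ i, m (Af i) = m (Bf i) := by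
    intro i
    have hinvi := hminv (g i)⁻¹ (Bf i)
    have he : (⟨fun x => ((Bf i : G → ℂ)) (((g i)⁻¹)⁻¹ * x), by
        obtain ⟨C, hC⟩ := (Bf i).2
        exact ⟨C, fun x => hC _⟩⟩ : boundedFuns G) = Af i := by
      apply Subtype.ext
      funext x
      show ((F i (((g i)⁻¹)⁻¹ * x) : ℝ) : ℂ) = ((F i (g i * x) : ℝ) : ℂ)
      rw [inv_inv]
    rw [he] at hinvi
    exact hinvi
  set hel : boundedFuns G := ∑ i : Fin n, (Af i - Bf i) with hhel
  have hmhel : m hel = 0 := by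
    rw [hhel, map_sum]
    refine Finset.sum_eq_zero (fun i _ => ?_)
    rw [map_sub, hmAB i, sub_self]
  have hhelval : ∀ y, (hel : G → ℂ)
      y = ((∑ i : Fin n, (F i (g i * y) - F i y) : ℝ) : ℂ) := by
    intro y
    have h1 : ((hel : boundedFuns G) : G → ℂ)
        = ∑ i : Fin n, ((Af i - Bf i : boundedFuns G) : G → ℂ) := by
      rw [hhel]
      exact map_sum ((boundedFuns G).subtype) _ _
    rw [h1, Finset.sum_apply]
    push_cast
    refine Finset.sum_congr rfl (fun i _ => ?_)
    rfl
  set e1 : boundedFuns G := ⟨fun _ => 1, 1, fun _ => by simp⟩ with he1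
  set f2 : boundedFuns G := ((uu : ℂ)) • e1 - hel with hf2
  have hf2val : ∀ y, (f2 : G → ℂ) y
      = ((uu - ∑ i : Fin n, (F i (g i * y) - F i y) : ℝ) : ℂ) := by
    intro y
    have h1 : (f2 : G → ℂ) y = (uu:ℂ) * (e1 : G → ℂ) y - (hel : G → ℂ) y := rfl
    rw [h1, hhelval y]
    have h2 : (e1 : G → ℂ) y = 1 := rfl
    rw [h2, mul_one]
    push_cast
    ring
  have hpos := hmpos f2 (fun y => ⟨uu - ∑ i : Fin n, (F i (g i * y) - F i y),
    by linarith [hhy y], hf2val y⟩)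
  obtain ⟨r, hr0, hrval⟩ := hpos
  have hmf2 : m f2 = (uu : ℂ) := by
    rw [hf2, map_sub, map_smul, hmhel, hm1, sub_zero, smul_eq_mul, mul_one]
  have huur : (uu : ℝ) = r := by
    have := hmf2.symm.trans hrval
    exact_mod_cast this
  linarith


end fwd

end Kesten
end

/-- Kesten's criterion: a finitely generated group `G = ⟨g₁, ..., gₙ⟩` is amenable iff `1` lies
in the spectrum of the Markov operator `M_λ = (1/n)(λ(g₁) + ⋯ + λ(gₙ))` of its left regular
representation `λ` on `ℓ²(G)`, i.e. iff `I − M_λ` is not invertible. -/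
theorem stmt11 {G : Type*} [Group G] (n : ℕ) (hn : 0 < n) (g : Fin n → G)
    (hgen : Subgroup.closure (Set.range g) = ⊤)
    (lam : G → (lp (fun _ : G => ℂ) 2 →L[ℂ] lp (fun _ : G => ℂ) 2))
    (hlam : ∀ (x : G) (f : lp (fun _ : G => ℂ) 2) (y : G),
      (lam x f : ∀ _ : G, ℂ) y = f (x⁻¹ * y)) :
    IsAmenable G ↔
      ¬ IsUnit ((1 : lp (fun _ : G => ℂ) 2 →L[ℂ] lp (fun _ : G => ℂ) 2)
        - ((n : ℂ)⁻¹) • ∑ i : Fin n, lam (g i)) := by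
  constructor
  · intro hAm hUnit
    exact Kesten.forward lam hlam g hn hUnit hAm
  · intro hTu
    obtain ⟨ξ, h1, h2⟩ := Kesten.almost_inv_seq lam g
      (fun a f => Kesten.lam_norm lam hlam a f) hn hTu
    have hext : ∀ a : G, Filter.Tendsto (fun k => ‖lam a (ξ k) - ξ k‖)
        Filter.atTop (nhds 0) := fun a =>
      Kesten.extend_almost_inv lam hlam (Set.range g) hgen ξ
        (fun s hs => by obtain ⟨i, rfl⟩ := hs; exact h2 i) a
    exact Kesten.mean_of_seq lam hlam (fun a f => Kesten.lam_norm lam hlam a f) ξ h1 hext
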